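/- Let R be an n×n real symmetric positive definite matrix, K : [0,∞) → ℝ a nonnegative function and ω : [0,∞) → ℝⁿ a function, such that K, s ↦ sK(s), s ↦ s²K(s), s ↦ K(s)ω(s), s ↦ sK(s)ω(s) and s ↦ K(s)ω(s)ᵀRω(s) are integrable on [0,∞). Set K₀ := ∫_0^∞ K(s) ds, K₁ := ∫_0^∞ sK(s) ds, K₂ := ∫_0^∞ s²K(s) ds, and assume K₀ > 0 and K₂ − K₁²/K₀ > 0. Then ∫_0^∞ K(s) ω(s)ᵀ R ω(s) ds ≥ K₀⁻¹ (∫_0^∞ K(s)ω(s) ds)ᵀ R (∫_0^∞ K(s)ω(s) ds) + (K₂ − K₁²/K₀)⁻¹ Ω̃ᵀ R Ω̃, where Ω̃ := (K₁/K₀) ∫_0^∞ K(s)ω(s) ds − ∫_0^∞ sK(s)ω(s) ds. -/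

import Mathlib

open MeasureTheory Matrix

set_option maxHeartbeats 1000000

noncomputable def dotCLM {n : ℕ} (w : Fin n → ℝ) : (Fin n → ℝ) →L[ℝ] ℝ :=
  LinearMap.toContinuousLinearMap
    { toFun := fun v => v ⬝ᵥ w
      map_add' := fun x y => add_dotProduct x y w
      map_smul' := fun r x => smul_dotProduct r x w }

@[simp] lemma dotCLM_apply {n : ℕ} (w v : Fin n → ℝ) : dotCLM w v = v ⬝ᵥ w := rfl

lemma integral_dotProduct_const {n : ℕ} {μ : Measure ℝ} {f : ℝ → Fin n → ℝ}
    (hf : Integrable f μ) (w : Fin n → ℝ) :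
    ∫ x, f x ⬝ᵥ w ∂μ = (∫ x, f x ∂μ) ⬝ᵥ w := by
  simpa using (dotCLM w).integral_comp_comm hf

lemma symm_dot {n : ℕ} {R : Matrix (Fin n) (Fin n) ℝ} (hRsym : R.IsSymm)
    (x y : Fin n → ℝ) : x ⬝ᵥ R.mulVec y = y ⬝ᵥ R.mulVec x := by
  have h : x ᵥ* R = R *ᵥ x := by conv_lhs => rw [← hRsym.eq, vecMul_transpose]
  rw [dotProduct_mulVec, h, dotProduct_comm]

theorem extended_jensen_infinite_interval_moments {n : ℕ}
    (R : Matrix (Fin n) (Fin n) ℝ) (hRsym : R.IsSymm) (hRpd : R.PosDef)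
    (K : ℝ → ℝ) (ω : ℝ → (Fin n → ℝ))
    (hKnonneg : ∀ s ∈ Set.Ici (0 : ℝ), 0 ≤ K s)
    (hK : IntegrableOn K (Set.Ici (0 : ℝ)))
    (hsK : IntegrableOn (fun s => s * K s) (Set.Ici (0 : ℝ)))
    (hs2K : IntegrableOn (fun s => s ^ 2 * K s) (Set.Ici (0 : ℝ)))
    (hKω : IntegrableOn (fun s => K s • ω s) (Set.Ici (0 : ℝ)))
    (hsKω : IntegrableOn (fun s => (s * K s) • ω s) (Set.Ici (0 : ℝ)))
    (hKωRω : IntegrableOn (fun s => K s * (ω s ⬝ᵥ R.mulVec (ω s))) (Set.Ici (0 : ℝ)))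
    (K0 K1 K2 : ℝ)
    (hK0 : K0 = ∫ s in Set.Ici (0 : ℝ), K s)
    (hK1 : K1 = ∫ s in Set.Ici (0 : ℝ), s * K s)
    (hK2 : K2 = ∫ s in Set.Ici (0 : ℝ), s ^ 2 * K s)
    (hK0pos : 0 < K0)
    (hvar : 0 < K2 - K1 ^ 2 / K0)
    (Ω : Fin n → ℝ)
    (hΩ : Ω = (K1 / K0) • (∫ s in Set.Ici (0 : ℝ), K s • ω s) -
      ∫ s in Set.Ici (0 : ℝ), (s * K s) • ω s) :
    ∫ s in Set.Ici (0 : ℝ), K s * (ω s ⬝ᵥ R.mulVec (ω s)) ≥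
      K0⁻¹ * ((∫ s in Set.Ici (0 : ℝ), K s • ω s) ⬝ᵥ
          R.mulVec (∫ s in Set.Ici (0 : ℝ), K s • ω s)) +
      (K2 - K1 ^ 2 / K0)⁻¹ * (Ω ⬝ᵥ R.mulVec Ω) := by
  have hsym := fun x y => symm_dot hRsym x y
  obtain ⟨a, ha⟩ : ∃ x, x = ∫ s in Set.Ici (0 : ℝ), K s • ω s := ⟨_, rfl⟩
  obtain ⟨b, hb⟩ : ∃ x, x = ∫ s in Set.Ici (0 : ℝ), (s * K s) • ω s := ⟨_, rfl⟩
  obtain ⟨c, hc⟩ : ∃ x : ℝ, x = K1 / K0 := ⟨_, rfl⟩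
  obtain ⟨V, hV⟩ : ∃ x : ℝ, x = K2 - K1 ^ 2 / K0 := ⟨_, rfl⟩
  rw [← ha, ← hb, ← hc] at hΩ
  rw [← ha, ← hV]
  rw [← hV] at hvar
  have hK0ne : K0 ≠ 0 := ne_of_gt hK0pos
  have hVne : V ≠ 0 := ne_of_gt hvar
  obtain ⟨u, hu⟩ : ∃ x, x = K0⁻¹ • a := ⟨_, rfl⟩
  obtain ⟨v, hv⟩ : ∃ x, x = V⁻¹ • (b - c • a) := ⟨_, rfl⟩
  obtain ⟨p, hp⟩ : ∃ x, x = R.mulVec ((2 * c) • v - (2 : ℝ) • u) := ⟨_, rfl⟩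
  obtain ⟨q, hq⟩ : ∃ x, x = R.mulVec ((-2 : ℝ) • v) := ⟨_, rfl⟩
  obtain ⟨c0, hc0⟩ : ∃ x : ℝ, x = u ⬝ᵥ R.mulVec u - 2 * c * (u ⬝ᵥ R.mulVec v)
    + c ^ 2 * (v ⬝ᵥ R.mulVec v) := ⟨_, rfl⟩
  obtain ⟨c1, hc1⟩ : ∃ x : ℝ, x = 2 * (u ⬝ᵥ R.mulVec v) - 2 * c * (v ⬝ᵥ R.mulVec v) :=
    ⟨_, rfl⟩
  obtain ⟨c2, hc2⟩ : ∃ x : ℝ, x = v ⬝ᵥ R.mulVec v := ⟨_, rfl⟩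
  have hpt : ∀ s : ℝ,
      K s * ((ω s - u - (s - c) • v) ⬝ᵥ R.mulVec (ω s - u - (s - c) • v))
      = K s * (ω s ⬝ᵥ R.mulVec (ω s)) + ((K s • ω s) ⬝ᵥ p + (((s * K s) • ω s) ⬝ᵥ q
        + (K s * c0 + ((s * K s) * c1 + (s ^ 2 * K s) * c2)))) := by
    intro s
    simp only [hp, hq, hc0, hc1, hc2, mulVec_sub, mulVec_add, mulVec_smul,
      sub_dotProduct, add_dotProduct, smul_dotProduct, dotProduct_sub, dotProduct_add,
      dotProduct_smul, smul_eq_mul]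
    rw [hsym u (ω s), hsym v (ω s), hsym v u]
    ring
  have hpos : 0 ≤ ∫ s in Set.Ici (0 : ℝ),
      K s * ((ω s - u - (s - c) • v) ⬝ᵥ R.mulVec (ω s - u - (s - c) • v)) := by
    apply setIntegral_nonneg measurableSet_Ici
    intro s hs
    have h2 := hRpd.posSemidef.dotProduct_mulVec_nonneg (ω s - u - (s - c) • v)
    simp only [star_trivial] at h2
    exact mul_nonneg (hKnonneg s hs) h2
  have hI2 : IntegrableOn (fun s => (K s • ω s) ⬝ᵥ p) (Set.Ici (0 : ℝ)) := by
    simpa [IntegrableOn] using (dotCLM p).integrable_comp hKω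
  have hI3 : IntegrableOn (fun s => ((s * K s) • ω s) ⬝ᵥ q) (Set.Ici (0 : ℝ)) := by
    simpa [IntegrableOn] using (dotCLM q).integrable_comp hsKω
  have hI4 : IntegrableOn (fun s => K s * c0) (Set.Ici (0 : ℝ)) := hK.mul_const c0
  have hI5 : IntegrableOn (fun s => (s * K s) * c1) (Set.Ici (0 : ℝ)) := hsK.mul_const c1
  have hI6 : IntegrableOn (fun s => (s ^ 2 * K s) * c2) (Set.Ici (0 : ℝ)) :=
    hs2K.mul_const c2
  simp only [hpt] at hpos
  have hI56 : IntegrableOn (fun s => (s * K s) * c1 + (s ^ 2 * K s) * c2)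
    (Set.Ici (0 : ℝ)) := hI5.add hI6
  have hI456 : IntegrableOn (fun s => K s * c0 + ((s * K s) * c1 + (s ^ 2 * K s) * c2))
    (Set.Ici (0 : ℝ)) := hI4.add hI56
  have hI3456 : IntegrableOn (fun s => ((s * K s) • ω s) ⬝ᵥ q
      + (K s * c0 + ((s * K s) * c1 + (s ^ 2 * K s) * c2))) (Set.Ici (0 : ℝ)) :=
    hI3.add hI456
  have hI23456 : IntegrableOn (fun s => (K s • ω s) ⬝ᵥ p + (((s * K s) • ω s) ⬝ᵥ q
      + (K s * c0 + ((s * K s) * c1 + (s ^ 2 * K s) * c2)))) (Set.Ici (0 : ℝ)) :=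
    hI2.add hI3456
  rw [integral_add hKωRω hI23456,
    integral_add hI2 hI3456,
    integral_add hI3 hI456,
    integral_add hI4 hI56,
    integral_add hI5 hI6,
    integral_dotProduct_const hKω p,
    integral_dotProduct_const hsKω q,
    integral_mul_const c0 K,
    integral_mul_const c1 (fun s => s * K s),
    integral_mul_const c2 (fun s => s ^ 2 * K s),
    ← ha, ← hb, ← hK0, ← hK1, ← hK2] at hpos
  have key : a ⬝ᵥ p + (b ⬝ᵥ q + (K0 * c0 + (K1 * c1 + K2 * c2)))
      = -(K0⁻¹ * (a ⬝ᵥ R.mulVec a) + V⁻¹ * (Ω ⬝ᵥ R.mulVec Ω)) := by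
    subst hΩ
    simp only [hp, hq, hc0, hc1, hc2, hu, hv, mulVec_sub, mulVec_add, mulVec_smul,
      sub_dotProduct, add_dotProduct, smul_dotProduct, dotProduct_sub, dotProduct_add,
      dotProduct_smul, smul_eq_mul]
    rw [hsym b a]
    have e1 : K1 = c * K0 := by rw [hc]; field_simp
    have e2 : K2 = V + c ^ 2 * K0 := by rw [hV, hc]; field_simp; ring
    rw [e1, e2]
    field_simp
    ring
  rw [key] at hpos
  linarith
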